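/- Let K ≥ 1, let M_1, …, M_K be metric spaces, let P be a Borel probability measure on the product Π_j M_j, and assume there is a point m⁰ ∈ Π_j M_j such that z ↦ d_j(m⁰_j, z_j) is integrable with respect to P for every j. For a weight vector w in the standard simplex and m ∈ Π_j M_j define F_w(m) = ∫ √(Σ_j w_j · d_j(m_j, z_j)²) dP(z). Then the infimum of F_w(m) over all m ∈ Π_j M_j and all w in the standard simplex equals the minimum over j of inf_{p ∈ M_j} ∫ d_j(p, z_j) dP(z). -/
import Mathlib


open MeasureTheory

theorem stmt_8 (K : ℕ) (hK : 1 ≤ K) (M : Fin K → Type*)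
    [∀ j, MetricSpace (M j)] [∀ j, MeasurableSpace (M j)] [∀ j, BorelSpace (M j)]
    (P : Measure (Π j, M j)) [IsProbabilityMeasure P]
    (m0 : Π j, M j)
    (hint : ∀ j, Integrable (fun z : Π j, M j => dist (m0 j) (z j)) P)
    (F : (Fin K → ℝ) → (Π j, M j) → ℝ)
    (hF : ∀ w m, F w m = ∫ z, Real.sqrt (∑ j, w j * dist (m j) (z j) ^ 2) ∂P) :
    sInf {v : ℝ | ∃ m : Π j, M j, ∃ w ∈ stdSimplex ℝ (Fin K), v = F w m} =
      Finset.univ.inf'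
        (Finset.univ_nonempty_iff.mpr (Fin.pos_iff_nonempty.mp hK))
        (fun j => sInf {v : ℝ | ∃ p : M j, v = ∫ z, dist p (z j) ∂P}) := by
  set S : Set ℝ := {v : ℝ | ∃ m : Π j, M j, ∃ w ∈ stdSimplex ℝ (Fin K), v = F w m} with hS
  set T : Fin K → Set ℝ := fun j => {v : ℝ | ∃ p : M j, v = ∫ z, dist p (z j) ∂P} with hT
  -- measurability
  have hmeas : ∀ (j : Fin K) (p : M j), Measurable (fun z : Π j, M j => dist p (z j)) :=
    fun j p => (continuous_const.dist continuous_id).measurable.comp (measurable_pi_apply j)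
  -- integrability of each factor distance at any point
  have hintM : ∀ (j : Fin K) (p : M j), Integrable (fun z : Π j, M j => dist p (z j)) P := by
    intro j p
    refine ((hint j).add (integrable_const (dist p (m0 j)))).mono' (hmeas j p).aestronglyMeasurable ?_
    filter_upwards with z
    rw [Real.norm_eq_abs, abs_of_nonneg dist_nonneg]
    calc dist p (z j) ≤ dist p (m0 j) + dist (m0 j) (z j) := dist_triangle _ _ _
      _ = dist (m0 j) (z j) + dist p (m0 j) := add_comm _ _
  -- unit weight vectors
  have hej : ∀ j : Fin K, (fun k => if k = j then (1:ℝ) else 0) ∈ stdSimplex ℝ (Fin K) := by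
    intro j
    constructor
    · intro k; dsimp only; split <;> norm_num
    · simp
  -- F at unit weight
  have hFej : ∀ (j : Fin K) (m : Π j, M j),
      F (fun k => if k = j then (1:ℝ) else 0) m = ∫ z, dist (m j) (z j) ∂P := by
    intro j m
    rw [hF]
    congr 1
    ext z
    have : ∑ k, (if k = j then (1:ℝ) else 0) * dist (m k) (z k) ^ 2
        = dist (m j) (z j) ^ 2 := by
      rw [Finset.sum_eq_single j]
      · simp
      · intro k _ hk; simp [hk]
      · simp
    rw [this, Real.sqrt_sq dist_nonneg]
  -- T j nonempty and bounded below
  have hTne : ∀ j, (T j).Nonempty := fun j => ⟨_, m0 j, rfl⟩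
  have hTbdd : ∀ j, BddBelow (T j) := by
    intro j
    refine ⟨0, fun v hv => ?_⟩
    obtain ⟨p, rfl⟩ := hv
    exact integral_nonneg fun z => dist_nonneg
  -- S bounded below
  have hSbdd : BddBelow S := by
    refine ⟨0, fun v hv => ?_⟩
    obtain ⟨m, w, _, rfl⟩ := hv
    rw [hF]
    exact integral_nonneg fun z => Real.sqrt_nonneg _
  -- S nonempty
  have hSne : S.Nonempty := by
    obtain ⟨j⟩ := Fin.pos_iff_nonempty.mp hK
    exact ⟨_, m0, _, hej j, rfl⟩
  refine le_antisymm ?_ ?_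
  · -- sInf S ≤ min: show sInf S ≤ sInf (T j) for each j, since T j ⊆ S
    apply Finset.le_inf'
    intro j _
    refine csInf_le_csInf hSbdd (hTne j) ?_
    rintro v ⟨p, rfl⟩
    refine ⟨Function.update m0 j p, _, hej j, ?_⟩
    rw [hFej j, Function.update_self]
  · -- min ≤ every element of S
    refine le_csInf hSne ?_
    rintro v ⟨m, w, hw, rfl⟩
    set B : ℝ := Finset.univ.inf'
        (Finset.univ_nonempty_iff.mpr (Fin.pos_iff_nonempty.mp hK))
        (fun j => sInf (T j)) with hB
    -- pointwise Cauchy-Schwarz bound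
    have hpt : ∀ z : Π j, M j,
        ∑ j, w j * dist (m j) (z j) ≤ Real.sqrt (∑ j, w j * dist (m j) (z j) ^ 2) := by
      intro z
      have := Real.sum_sqrt_mul_sqrt_le Finset.univ
        (f := fun j => w j) (g := fun j => w j * dist (m j) (z j) ^ 2)
        (fun j => hw.1 j) (fun j => mul_nonneg (hw.1 j) (sq_nonneg _))
      rw [hw.2, Real.sqrt_one, one_mul] at this
      refine le_trans (le_of_eq ?_) this
      apply Finset.sum_congr rfl
      intro j _
      rw [Real.sqrt_mul (hw.1 j), Real.sqrt_sq dist_nonneg, ← mul_assoc,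
        Real.mul_self_sqrt (hw.1 j)]
    -- integrability of the sqrt integrand
    have hint1 : Integrable (fun z : Π j, M j =>
        Real.sqrt (∑ j, w j * dist (m j) (z j) ^ 2)) P := by
      have hmeas1 : Measurable (fun z : Π j, M j =>
          Real.sqrt (∑ j, w j * dist (m j) (z j) ^ 2)) := by
        apply Real.continuous_sqrt.measurable.comp
        exact Finset.measurable_sum _ fun j _ =>
          ((hmeas j (m j)).pow_const 2).const_mul (w j)
      refine (integrable_finset_sum Finset.univ
        (fun j _ => hintM j (m j))).mono' hmeas1.aestronglyMeasurable ?_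
      filter_upwards with z
      rw [Real.norm_eq_abs, abs_of_nonneg (Real.sqrt_nonneg _)]
      have h1 : ∑ j, w j * dist (m j) (z j) ^ 2 ≤ (∑ j, dist (m j) (z j)) ^ 2 := by
        refine le_trans (Finset.sum_le_sum fun j _ => ?_)
          (Finset.sum_sq_le_sq_sum_of_nonneg fun j _ => dist_nonneg)
        have hw1 : w j ≤ 1 := by
          rw [← hw.2]
          exact Finset.single_le_sum (fun k _ => hw.1 k) (Finset.mem_univ j)
        calc w j * dist (m j) (z j) ^ 2 ≤ 1 * dist (m j) (z j) ^ 2 :=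
              mul_le_mul_of_nonneg_right hw1 (sq_nonneg _)
          _ = dist (m j) (z j) ^ 2 := one_mul _
      calc Real.sqrt (∑ j, w j * dist (m j) (z j) ^ 2)
          ≤ Real.sqrt ((∑ j, dist (m j) (z j)) ^ 2) := Real.sqrt_le_sqrt h1
        _ = ∑ j, dist (m j) (z j) :=
            Real.sqrt_sq (Finset.sum_nonneg fun j _ => dist_nonneg)
    -- main chain
    have key : ∑ j, w j * sInf (T j) ≤ F w m := by
      rw [hF]
      have h2 : ∑ j, w j * sInf (T j) ≤ ∑ j, w j * ∫ z, dist (m j) (z j) ∂P := by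
        refine Finset.sum_le_sum fun j _ => ?_
        exact mul_le_mul_of_nonneg_left (csInf_le (hTbdd j) ⟨m j, rfl⟩) (hw.1 j)
      refine h2.trans ?_
      have h3 : ∑ j, w j * ∫ z, dist (m j) (z j) ∂P
          = ∫ z, ∑ j, w j * dist (m j) (z j) ∂P := by
        rw [integral_finset_sum]
        · exact Finset.sum_congr rfl fun j _ => (integral_const_mul _ _).symm
        · exact fun j _ => (hintM j (m j)).const_mul (w j)
      rw [h3]
      refine integral_mono ?_ hint1 hpt
      exact (integrable_finset_sum Finset.univ
        fun j _ => (hintM j (m j)).const_mul (w j))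
    refine le_trans ?_ key
    calc B = ∑ j, w j * B := by
          rw [← Finset.sum_mul, hw.2, one_mul]
      _ ≤ ∑ j, w j * sInf (T j) := by
          refine Finset.sum_le_sum fun j _ => ?_
          exact mul_le_mul_of_nonneg_left (Finset.inf'_le _ (Finset.mem_univ j)) (hw.1 j)
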